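/- Let λ = λ(n) and κ = κ(n) be positive integers with κ(n) ≥ 2, let A_n ⊆ [n] and X_n ⊆ A_n with |X_n| = λ(n), and suppose that for each x ∈ X_n there is a set D_x of κ(n) positive integers such that for every d ∈ D_x, either S⁺_{A_n}(x) or S⁻_{A_n}(x) contains a 4-term arithmetic progression with common difference d. If p = p(n) ∈ [0,1] satisfies p = ω(max{(λ(n)·κ(n))^{−1/2}, κ(n)^{−1}}), then the probability that A_n ∪ [n]_{p(n)} is Schur tends to 1 as n → ∞. -/

import Mathlib

open Filter

/-- A set `S` is *Schur* if every 2-colouring of its elements yields a monochromatic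
triple `x, y, z ∈ S` (not necessarily distinct) with `x + y = z`. -/
def IsSchur {α : Type*} [Add α] (S : Set α) : Prop :=
  ∀ f : α → Bool, ∃ x ∈ S, ∃ y ∈ S, ∃ z ∈ S, f x = f y ∧ f y = f z ∧ x + y = z

/-- The probability that the random subset `[m]_p` of `{1, …, m}`, in which each element is
included independently with probability `p`, lies in the event `E`. -/
noncomputable def randProb (m : ℕ) (p : ℝ) (E : Set (Finset ℕ)) : ℝ :=
  ∑ S ∈ (Finset.Icc 1 m).powerset,
    E.indicator (fun T => p ^ T.card * (1 - p) ^ (m - T.card)) S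

/-- `S⁺_A(x) = {y ∈ A : x + y ∈ A}`. -/
def Splus (A : Finset ℕ) (x : ℕ) : Finset ℕ := A.filter fun y => x + y ∈ A

/-- `S⁻_A(x) = {y ∈ A : x − y ∈ A}` (the condition `y < x` ensures the difference `x − y`
is a genuine positive integer). -/
def Sminus (A : Finset ℕ) (x : ℕ) : Finset ℕ := A.filter fun y => y < x ∧ x - y ∈ A

/-- `S` contains a 4-term arithmetic progression with common difference `d`. -/
def HasAPWithDiff (S : Finset ℕ) (d : ℕ) : Prop :=
  ∃ a, a ∈ S ∧ a + d ∈ S ∧ a + 2 * d ∈ S ∧ a + 3 * d ∈ S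

open scoped Classical

set_option maxHeartbeats 2000000 in
set_option synthInstance.maxHeartbeats 400000 in
set_option synthInstance.maxSize 2048 in
lemma boolCore : ∀ (r0 r1 r2 r3 s0 s1 s2 s3 cx cd ce : Bool),
    (r0 = cd ∧ cd = r1) ∨ (r1 = cd ∧ cd = r2) ∨ (r2 = cd ∧ cd = r3)
    ∨ (s0 = cd ∧ cd = s1) ∨ (s1 = cd ∧ cd = s2) ∨ (s2 = cd ∧ cd = s3)
    ∨ (r0 = cx ∧ cx = s0) ∨ (r1 = cx ∧ cx = s1) ∨ (r2 = cx ∧ cx = s2) ∨ (r3 = cx ∧ cx = s3)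
    ∨ (ce = r0 ∧ r0 = s1) ∨ (ce = r1 ∧ r1 = s2) ∨ (ce = r2 ∧ r2 = s3)
    ∨ (cx = cd ∧ cd = ce) := by decide

lemma keyPlus (U : Set ℕ) (x a d : ℕ)
    (hy0 : a ∈ U) (hy1 : a+d ∈ U) (hy2 : a+2*d ∈ U) (hy3 : a+3*d ∈ U)
    (hz0 : x+a ∈ U) (hz1 : x+(a+d) ∈ U) (hz2 : x+(a+2*d) ∈ U) (hz3 : x+(a+3*d) ∈ U)
    (hx : x ∈ U) (hdU : d ∈ U) (he : x+d ∈ U) : IsSchur U := by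
  intro f
  rcases boolCore (f a) (f (a+d)) (f (a+2*d)) (f (a+3*d)) (f (x+a)) (f (x+(a+d)))
      (f (x+(a+2*d))) (f (x+(a+3*d))) (f x) (f d) (f (x+d)) with
    h|h|h|h|h|h|h|h|h|h|h|h|h|h
  · exact ⟨a, hy0, d, hdU, a+d, hy1, h.1, h.2, by omega⟩
  · exact ⟨a+d, hy1, d, hdU, a+2*d, hy2, h.1, h.2, by omega⟩
  · exact ⟨a+2*d, hy2, d, hdU, a+3*d, hy3, h.1, h.2, by omega⟩
  · exact ⟨x+a, hz0, d, hdU, x+(a+d), hz1, h.1, h.2, by omega⟩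
  · exact ⟨x+(a+d), hz1, d, hdU, x+(a+2*d), hz2, h.1, h.2, by omega⟩
  · exact ⟨x+(a+2*d), hz2, d, hdU, x+(a+3*d), hz3, h.1, h.2, by omega⟩
  · exact ⟨a, hy0, x, hx, x+a, hz0, h.1, h.2, by omega⟩
  · exact ⟨a+d, hy1, x, hx, x+(a+d), hz1, h.1, h.2, by omega⟩
  · exact ⟨a+2*d, hy2, x, hx, x+(a+2*d), hz2, h.1, h.2, by omega⟩
  · exact ⟨a+3*d, hy3, x, hx, x+(a+3*d), hz3, h.1, h.2, by omega⟩
  · exact ⟨x+d, he, a, hy0, x+(a+d), hz1, h.1, h.2, by omega⟩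
  · exact ⟨x+d, he, a+d, hy1, x+(a+2*d), hz2, h.1, h.2, by omega⟩
  · exact ⟨x+d, he, a+2*d, hy2, x+(a+3*d), hz3, h.1, h.2, by omega⟩
  · exact ⟨x, hx, d, hdU, x+d, he, h.1, h.2, rfl⟩

lemma keyMinus (U : Set ℕ) (x a d : ℕ) (hlt : a+3*d < x)
    (hy0 : a ∈ U) (hy1 : a+d ∈ U) (hy2 : a+2*d ∈ U) (hy3 : a+3*d ∈ U)
    (hz0 : x-a ∈ U) (hz1 : x-(a+d) ∈ U) (hz2 : x-(a+2*d) ∈ U) (hz3 : x-(a+3*d) ∈ U)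
    (hx : x ∈ U) (hdU : d ∈ U) (he : x-d ∈ U) : IsSchur U := by
  intro f
  rcases boolCore (f a) (f (a+d)) (f (a+2*d)) (f (a+3*d)) (f (x-a)) (f (x-(a+d)))
      (f (x-(a+2*d))) (f (x-(a+3*d))) (f x) (f d) (f (x-d)) with
    h|h|h|h|h|h|h|h|h|h|h|h|h|h
  · exact ⟨a, hy0, d, hdU, a+d, hy1, h.1, h.2, by omega⟩
  · exact ⟨a+d, hy1, d, hdU, a+2*d, hy2, h.1, h.2, by omega⟩
  · exact ⟨a+2*d, hy2, d, hdU, a+3*d, hy3, h.1, h.2, by omega⟩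
  · exact ⟨x-(a+d), hz1, d, hdU, x-a, hz0, h.2.symm, h.1.symm, by omega⟩
  · exact ⟨x-(a+2*d), hz2, d, hdU, x-(a+d), hz1, h.2.symm, h.1.symm, by omega⟩
  · exact ⟨x-(a+3*d), hz3, d, hdU, x-(a+2*d), hz2, h.2.symm, h.1.symm, by omega⟩
  · exact ⟨a, hy0, x-a, hz0, x, hx, h.1.trans h.2, h.2.symm, by omega⟩
  · exact ⟨a+d, hy1, x-(a+d), hz1, x, hx, h.1.trans h.2, h.2.symm, by omega⟩
  · exact ⟨a+2*d, hy2, x-(a+2*d), hz2, x, hx, h.1.trans h.2, h.2.symm, by omega⟩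
  · exact ⟨a+3*d, hy3, x-(a+3*d), hz3, x, hx, h.1.trans h.2, h.2.symm, by omega⟩
  · exact ⟨x-(a+d), hz1, a, hy0, x-d, he, h.2.symm, h.1.symm, by omega⟩
  · exact ⟨x-(a+2*d), hz2, a+d, hy1, x-d, he, h.2.symm, h.1.symm, by omega⟩
  · exact ⟨x-(a+3*d), hz3, a+2*d, hy2, x-d, he, h.2.symm, h.1.symm, by omega⟩
  · exact ⟨d, hdU, x-d, he, x, hx, h.2, h.2.symm.trans h.1.symm, by omega⟩

lemma sum_w_total (u : Finset ℕ) (p : ℝ) :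
    ∑ t ∈ u.powerset, p ^ t.card * (1-p) ^ (u.card - t.card) = 1 := by
  calc ∑ t ∈ u.powerset, p ^ t.card * (1-p) ^ (u.card - t.card)
      = ∑ t ∈ u.powerset, (∏ _i ∈ t, p) * ∏ _i ∈ u \ t, (1-p) := by
        refine Finset.sum_congr rfl fun t ht => ?_
        rw [Finset.prod_const, Finset.prod_const,
          Finset.card_sdiff_of_subset (Finset.mem_powerset.mp ht)]
    _ = ∏ _i ∈ u, (p + (1 - p)) := (Finset.prod_add _ _ _).symm
    _ = 1 := by simp

/-- probability that a fixed subset `T ⊆ [n]` is contained in the random set -/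
lemma sum_w_subset (n : ℕ) (p : ℝ) (T : Finset ℕ) (hT : T ⊆ Finset.Icc 1 n) :
    ∑ S ∈ (Finset.Icc 1 n).powerset,
      (if T ⊆ S then p ^ S.card * (1-p) ^ (n - S.card) else 0) = p ^ T.card := by
  rw [Finset.sum_ite, Finset.sum_const_zero, add_zero]
  have hn : (Finset.Icc 1 n).card = n := by rw [Nat.card_Icc]; omega
  have key : ∑ S ∈ (Finset.Icc 1 n).powerset.filter (fun S => T ⊆ S),
      p ^ S.card * (1-p) ^ (n - S.card)
      = ∑ R ∈ (Finset.Icc 1 n \ T).powerset,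
        p ^ T.card * (p ^ R.card * (1-p) ^ ((Finset.Icc 1 n \ T).card - R.card)) := by
    refine Finset.sum_nbij' (fun S => S \ T) (fun R => T ∪ R) ?_ ?_ ?_ ?_ ?_
    · intro S hS
      simp only [Finset.mem_filter, Finset.mem_powerset] at hS ⊢
      exact Finset.sdiff_subset_sdiff hS.1 (le_refl _)
    · intro R hR
      simp only [Finset.mem_powerset] at hR
      simp only [Finset.mem_filter, Finset.mem_powerset]
      constructor
      · exact Finset.union_subset hT (hR.trans Finset.sdiff_subset)
      · exact Finset.subset_union_left
    · intro S hS
      simp only [Finset.mem_filter, Finset.mem_powerset] at hS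
      exact Finset.union_sdiff_of_subset hS.2
    · intro R hR
      simp only [Finset.mem_powerset] at hR
      refine Finset.union_sdiff_cancel_left ?_
      exact Finset.disjoint_left.mpr fun a ha hb => (Finset.mem_sdiff.mp (hR hb)).2 ha
    · intro S hS
      simp only [Finset.mem_filter, Finset.mem_powerset] at hS
      have hd : Disjoint T (S \ T) := Finset.disjoint_sdiff
      have hcard : S.card = T.card + (S \ T).card := by
        rw [← Finset.card_union_of_disjoint hd, Finset.union_sdiff_of_subset hS.2]
      have hSn : S.card ≤ n := by rw [← hn]; exact Finset.card_le_card hS.1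
      have hsd : (Finset.Icc 1 n \ T).card = n - T.card := by
        rw [Finset.card_sdiff_of_subset hT, hn]
      rw [hcard, pow_add, hsd]
      ring_nf
      congr 1
      · congr 1; omega
  rw [key, ← Finset.mul_sum, sum_w_total, mul_one]

lemma second_moment (n : ℕ) (p : ℝ) (hp0 : 0 ≤ p) (hp1 : p ≤ 1) {ι : Type} (I : Finset ι)
    (Ts : ι → Finset ℕ) (hTs : ∀ i ∈ I, Ts i ⊆ Finset.Icc 1 n) (E : Set (Finset ℕ))
    (hE : ∀ S : Finset ℕ, (∃ i ∈ I, Ts i ⊆ S) → S ∈ E) :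
    (∑ i ∈ I, p ^ (Ts i).card)^2
      ≤ randProb n p E * (∑ i ∈ I, ∑ j ∈ I, p ^ ((Ts i) ∪ (Ts j)).card) := by
  set w : Finset ℕ → ℝ := fun S => p ^ S.card * (1-p) ^ (n - S.card) with hw
  have hwnn : ∀ S, 0 ≤ w S := fun S =>
    mul_nonneg (pow_nonneg hp0 _) (pow_nonneg (by linarith) _)
  set X : Finset ℕ → ℝ := fun S => ∑ i ∈ I, (if Ts i ⊆ S then (1:ℝ) else 0) with hX
  have hXnn : ∀ S, 0 ≤ X S := fun S => Finset.sum_nonneg fun i _ => by positivity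
  -- first moment
  have hEX : ∑ S ∈ (Finset.Icc 1 n).powerset, w S * X S = ∑ i ∈ I, p ^ (Ts i).card := by
    simp only [hX, Finset.mul_sum]
    rw [Finset.sum_comm]
    refine Finset.sum_congr rfl fun i hi => ?_
    rw [← sum_w_subset n p (Ts i) (hTs i hi)]
    exact Finset.sum_congr rfl fun S _ => by rw [mul_ite, mul_one, mul_zero]
  -- second moment
  have hEX2 : ∑ S ∈ (Finset.Icc 1 n).powerset, w S * (X S)^2
      = ∑ i ∈ I, ∑ j ∈ I, p ^ ((Ts i) ∪ (Ts j)).card := by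
    have hsq : ∀ S, (X S)^2 = ∑ i ∈ I, ∑ j ∈ I,
        (if (Ts i) ∪ (Ts j) ⊆ S then (1:ℝ) else 0) := by
      intro S
      rw [sq, hX, Finset.sum_mul_sum]
      refine Finset.sum_congr rfl fun i _ => Finset.sum_congr rfl fun j _ => ?_
      rw [ite_mul, one_mul, zero_mul, ← ite_and]
      exact if_congr Finset.union_subset_iff.symm rfl rfl
    calc ∑ S ∈ (Finset.Icc 1 n).powerset, w S * (X S)^2
        = ∑ S ∈ (Finset.Icc 1 n).powerset, ∑ i ∈ I, ∑ j ∈ I,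
            (if (Ts i) ∪ (Ts j) ⊆ S then w S else 0) := by
          refine Finset.sum_congr rfl fun S _ => ?_
          rw [hsq, Finset.mul_sum]
          refine Finset.sum_congr rfl fun i _ => ?_
          rw [Finset.mul_sum]
          exact Finset.sum_congr rfl fun j _ => by rw [mul_ite, mul_one, mul_zero]
      _ = ∑ i ∈ I, ∑ j ∈ I, ∑ S ∈ (Finset.Icc 1 n).powerset,
            (if (Ts i) ∪ (Ts j) ⊆ S then w S else 0) := by
          rw [Finset.sum_comm]
          exact Finset.sum_congr rfl fun i _ => Finset.sum_comm
      _ = ∑ i ∈ I, ∑ j ∈ I, p ^ ((Ts i) ∪ (Ts j)).card := by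
          refine Finset.sum_congr rfl fun i hi => Finset.sum_congr rfl fun j hj => ?_
          exact sum_w_subset n p _ (Finset.union_subset (hTs i hi) (hTs j hj))
  -- Cauchy-Schwarz
  have hCS := Finset.sum_mul_sq_le_sq_mul_sq (Finset.Icc 1 n).powerset
    (fun S => (if X S ≠ 0 then (1:ℝ) else 0) * Real.sqrt (w S))
    (fun S => Real.sqrt (w S) * X S)
  have hfg : ∀ S, ((if X S ≠ 0 then (1:ℝ) else 0) * Real.sqrt (w S)) * (Real.sqrt (w S) * X S)
      = w S * X S := by
    intro S
    by_cases hxs : X S = 0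
    · simp [hxs]
    · rw [if_pos hxs]
      have : Real.sqrt (w S) * Real.sqrt (w S) = w S := Real.mul_self_sqrt (hwnn S)
      ring_nf
      rw [Real.sq_sqrt (hwnn S)]
      ring
  have hf2 : ∀ S, ((if X S ≠ 0 then (1:ℝ) else 0) * Real.sqrt (w S))^2
      = (if X S ≠ 0 then (1:ℝ) else 0) * w S := by
    intro S
    rw [mul_pow, Real.sq_sqrt (hwnn S)]
    by_cases hxs : X S = 0 <;> simp [hxs]
  have hg2 : ∀ S, (Real.sqrt (w S) * X S)^2 = w S * (X S)^2 := by
    intro S; rw [mul_pow, Real.sq_sqrt (hwnn S)]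
  rw [Finset.sum_congr rfl (fun S _ => hfg S), hEX] at hCS
  rw [Finset.sum_congr rfl (fun S _ => hf2 S), Finset.sum_congr rfl (fun S _ => hg2 S), hEX2]
    at hCS
  refine hCS.trans (mul_le_mul_of_nonneg_right ?_ ?_)
  · -- ∑ ind * w ≤ randProb n p E
    unfold randProb
    refine Finset.sum_le_sum fun S _ => ?_
    by_cases hxs : X S = 0
    · simp only [hxs, ne_eq, not_true_eq_false, if_false, zero_mul]
      exact Set.indicator_nonneg (fun T _ => hwnn T) S
    · rw [if_pos hxs, one_mul]
      have hex : ∃ i ∈ I, Ts i ⊆ S := by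
        by_contra hno
        push_neg at hno
        apply hxs
        rw [hX]
        exact Finset.sum_eq_zero fun i hi => if_neg (hno i hi)
      rw [Set.indicator_of_mem (hE S hex)]
  · rw [← hEX2]
    exact Finset.sum_nonneg fun S _ => mul_nonneg (hwnn S) (sq_nonneg _)

-- cardinality of the pair-set
lemma Ts_card (a b : ℕ) (h : a < b) : ({a, b} : Finset ℕ).card = 2 := by
  rw [Finset.card_insert_of_notMem (by simp; omega), Finset.card_singleton]

lemma count_equal (I : Finset (ℕ × ℕ)) (e : ℕ × ℕ → ℕ)
    (he : ∀ j ∈ I, (e j = j.1 + j.2 ∨ e j = j.1 - j.2) ∧ j.2 < e j ∧ 1 ≤ j.2)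
    (i : ℕ × ℕ) (hi : i ∈ I) :
    (I.filter (fun j => ({j.2, e j} : Finset ℕ) = {i.2, e i})).card ≤ 3 := by
  have hsub : I.filter (fun j => ({j.2, e j} : Finset ℕ) = {i.2, e i})
      ⊆ {(e i - i.2, i.2), (e i + i.2, i.2)} := by
    intro j hj
    rw [Finset.mem_filter] at hj
    obtain ⟨hjI, heq⟩ := hj
    obtain ⟨hej, hlt, hpos⟩ := he j hjI
    obtain ⟨_, hlti, _⟩ := he i hi
    -- from set equality deduce j.2 = i.2 and e j = e i
    have h1 : j.2 = i.2 ∨ j.2 = e i := by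
      have := heq ▸ (Finset.mem_insert_self j.2 {e j})
      simpa using this
    have h2 : e j = i.2 ∨ e j = e i := by
      have : e j ∈ ({j.2, e j} : Finset ℕ) := by simp
      rw [heq] at this; simpa using this
    have h3 : i.2 = j.2 ∨ i.2 = e j := by
      have : i.2 ∈ ({i.2, e i} : Finset ℕ) := by simp
      rw [← heq] at this; simpa using this
    have hj2 : j.2 = i.2 ∧ e j = e i := by omega
    simp only [Finset.mem_insert, Finset.mem_singleton]
    rcases hej with hp | hm
    · left; apply Prod.ext <;> simp <;> omega
    · right; apply Prod.ext <;> simp <;> omega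
  calc (I.filter _).card ≤ _ := Finset.card_le_card hsub
    _ ≤ 3 := by
      refine (Finset.card_insert_le _ _).trans ?_
      simp

lemma count_intersect (I : Finset (ℕ × ℕ)) (e : ℕ × ℕ → ℕ)
    (he : ∀ j ∈ I, (e j = j.1 + j.2 ∨ e j = j.1 - j.2) ∧ j.2 < e j ∧ 1 ≤ j.2)
    (i : ℕ × ℕ) (hi : i ∈ I) :
    (I.filter (fun j => ¬ Disjoint ({i.2, e i} : Finset ℕ) ({j.2, e j} : Finset ℕ))).card
      ≤ 6 * (I.image Prod.fst).card := by
  set F := I.filter (fun j => ¬ Disjoint ({i.2, e i} : Finset ℕ) ({j.2, e j} : Finset ℕ))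
    with hF
  set g : ℕ × ℕ → ℕ × ℕ := fun j => (j.1,
    if j.2 = i.2 then 0 else if j.2 = e i then 1 else
    if e j = j.1 + j.2 then (if e j = i.2 then 2 else 4) else (if e j = i.2 then 3 else 5))
    with hg
  have hmaps : ∀ j ∈ F, g j ∈ (I.image Prod.fst) ×ˢ (Finset.range 6) := by
    intro j hj
    rw [Finset.mem_filter] at hj
    simp only [Finset.mem_product, Finset.mem_image, Finset.mem_range, hg]
    refine ⟨⟨j, hj.1, rfl⟩, ?_⟩
    split_ifs <;> omega
  have hinj : Set.InjOn g F := by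
    intro j hj j' hj' hgj
    simp only [Finset.coe_filter, Set.mem_setOf_eq, hF, Finset.mem_coe, Finset.mem_filter]
      at hj hj'
    obtain ⟨hej, hltj, hposj⟩ := he j hj.1
    obtain ⟨hej', hltj', hposj'⟩ := he j' hj'.1
    have hdis : ¬ Disjoint ({i.2, e i} : Finset ℕ) ({j.2, e j} : Finset ℕ) := hj.2
    have hdis' : ¬ Disjoint ({i.2, e i} : Finset ℕ) ({j'.2, e j'} : Finset ℕ) := hj'.2
    have hmem : j.2 = i.2 ∨ j.2 = e i ∨ e j = i.2 ∨ e j = e i := by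
      rw [Finset.not_disjoint_iff] at hdis
      obtain ⟨a, ha1, ha2⟩ := hdis
      simp only [Finset.mem_insert, Finset.mem_singleton] at ha1 ha2
      omega
    have hmem' : j'.2 = i.2 ∨ j'.2 = e i ∨ e j' = i.2 ∨ e j' = e i := by
      rw [Finset.not_disjoint_iff] at hdis'
      obtain ⟨a, ha1, ha2⟩ := hdis'
      simp only [Finset.mem_insert, Finset.mem_singleton] at ha1 ha2
      omega
    have h1 : j.1 = j'.1 := by have := congrArg Prod.fst hgj; simpa [hg] using this
    have h2 := congrArg Prod.snd hgj
    simp only [hg] at h2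
    have : j.2 = j'.2 := by
      split_ifs at h2 <;> omega
    exact Prod.ext h1 this
  calc F.card ≤ ((I.image Prod.fst) ×ˢ (Finset.range 6)).card :=
        Finset.card_le_card_of_injOn g hmaps hinj
    _ = 6 * (I.image Prod.fst).card := by
        rw [Finset.card_product, Finset.card_range]; ring

lemma count_main (p : ℝ) (hp0 : 0 ≤ p) (hp1 : p ≤ 1)
    (I : Finset (ℕ × ℕ)) (e : ℕ × ℕ → ℕ)
    (he : ∀ j ∈ I, (e j = j.1 + j.2 ∨ e j = j.1 - j.2) ∧ j.2 < e j ∧ 1 ≤ j.2) :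
    ∑ i ∈ I, ∑ j ∈ I, p ^ (({i.2, e i} : Finset ℕ) ∪ {j.2, e j}).card
      ≤ (I.card : ℝ)^2 * p^4
        + (I.card : ℝ) * (3*p^2 + 6*((I.image Prod.fst).card : ℝ)*p^3) := by
  have key : ∀ i ∈ I, ∑ j ∈ I, p ^ (({i.2, e i} : Finset ℕ) ∪ {j.2, e j}).card
      ≤ (I.card : ℝ) * p^4 + (3*p^2 + 6*((I.image Prod.fst).card : ℝ)*p^3) := by
    intro i hi
    have hcardi : ({i.2, e i} : Finset ℕ).card = 2 := Ts_card _ _ (he i hi).2.1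
    rw [← Finset.sum_filter_add_sum_filter_not I
      (fun j => Disjoint ({i.2, e i} : Finset ℕ) ({j.2, e j} : Finset ℕ))]
    have hb1 : ∑ j ∈ I.filter (fun j => Disjoint ({i.2, e i} : Finset ℕ) {j.2, e j}),
        p ^ (({i.2, e i} : Finset ℕ) ∪ {j.2, e j}).card ≤ (I.card : ℝ) * p^4 := by
      have : ∀ j ∈ I.filter (fun j => Disjoint ({i.2, e i} : Finset ℕ) {j.2, e j}),
          p ^ (({i.2, e i} : Finset ℕ) ∪ {j.2, e j}).card = p^4 := by
        intro j hj
        rw [Finset.mem_filter] at hj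
        rw [Finset.card_union_of_disjoint hj.2, hcardi, Ts_card _ _ (he j hj.1).2.1]
      rw [Finset.sum_congr rfl this, Finset.sum_const, nsmul_eq_mul]
      have := Finset.card_filter_le I
        (fun j => Disjoint ({i.2, e i} : Finset ℕ) {j.2, e j})
      exact mul_le_mul_of_nonneg_right (by exact_mod_cast this) (by positivity)
    have hb2 : ∑ j ∈ I.filter
        (fun j => ¬ Disjoint ({i.2, e i} : Finset ℕ) {j.2, e j}),
        p ^ (({i.2, e i} : Finset ℕ) ∪ {j.2, e j}).card
        ≤ 3*p^2 + 6*((I.image Prod.fst).card : ℝ)*p^3 := by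
      set F := I.filter (fun j => ¬ Disjoint ({i.2, e i} : Finset ℕ) {j.2, e j}) with hFdef
      rw [← Finset.sum_filter_add_sum_filter_not F
        (fun j => ({j.2, e j} : Finset ℕ) = {i.2, e i})]
      have hb21 : ∑ j ∈ F.filter (fun j => ({j.2, e j} : Finset ℕ) = {i.2, e i}),
          p ^ (({i.2, e i} : Finset ℕ) ∪ {j.2, e j}).card ≤ 3 * p^2 := by
        have heq : ∀ j ∈ F.filter (fun j => ({j.2, e j} : Finset ℕ) = {i.2, e i}),
            p ^ (({i.2, e i} : Finset ℕ) ∪ {j.2, e j}).card = p^2 := by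
          intro j hj
          rw [Finset.mem_filter] at hj
          rw [hj.2, Finset.union_self, hcardi]
        rw [Finset.sum_congr rfl heq, Finset.sum_const, nsmul_eq_mul]
        have hsub : F.filter (fun j => ({j.2, e j} : Finset ℕ) = {i.2, e i})
            ⊆ I.filter (fun j => ({j.2, e j} : Finset ℕ) = {i.2, e i}) :=
          Finset.filter_subset_filter _ (Finset.filter_subset _ _)
        have hc : (F.filter (fun j => ({j.2, e j} : Finset ℕ) = {i.2, e i})).card ≤ 3 :=
          (Finset.card_le_card hsub).trans (count_equal I e he i hi)
        exact mul_le_mul_of_nonneg_right (by exact_mod_cast hc) (by positivity)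
      have hb22 : ∑ j ∈ F.filter (fun j => ¬ ({j.2, e j} : Finset ℕ) = {i.2, e i}),
          p ^ (({i.2, e i} : Finset ℕ) ∪ {j.2, e j}).card
          ≤ 6*((I.image Prod.fst).card : ℝ)*p^3 := by
        have hterm : ∀ j ∈ F.filter (fun j => ¬ ({j.2, e j} : Finset ℕ) = {i.2, e i}),
            p ^ (({i.2, e i} : Finset ℕ) ∪ {j.2, e j}).card ≤ p^3 := by
          intro j hj
          rw [Finset.mem_filter, hFdef, Finset.mem_filter] at hj
          obtain ⟨⟨hjI, hnd⟩, hne⟩ := hj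
          have hcardj : ({j.2, e j} : Finset ℕ).card = 2 := Ts_card _ _ (he j hjI).2.1
          have hinter : (({i.2, e i} : Finset ℕ) ∩ {j.2, e j}).card = 1 := by
            have hle : (({i.2, e i} : Finset ℕ) ∩ {j.2, e j}).card ≤ 2 := by
              rw [← hcardi]; exact Finset.card_le_card Finset.inter_subset_left
            have hpos : 0 < (({i.2, e i} : Finset ℕ) ∩ {j.2, e j}).card := by
              rw [Finset.card_pos]
              exact Finset.not_disjoint_iff_nonempty_inter.mp hnd
            rcases Nat.lt_or_ge (({i.2, e i} : Finset ℕ) ∩ {j.2, e j}).card 2 with h | h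
            · omega
            · exfalso
              have h1 : ({i.2, e i} : Finset ℕ) ∩ {j.2, e j} = {i.2, e i} :=
                Finset.eq_of_subset_of_card_le Finset.inter_subset_left (by omega)
              have h2 : ({i.2, e i} : Finset ℕ) ∩ {j.2, e j} = {j.2, e j} :=
                Finset.eq_of_subset_of_card_le Finset.inter_subset_right (by omega)
              exact hne (h2.symm.trans h1)
          have hu : (({i.2, e i} : Finset ℕ) ∪ {j.2, e j}).card = 3 := by
            have := Finset.card_union_add_card_inter ({i.2, e i} : Finset ℕ) {j.2, e j}
            omega
          rw [hu]
        calc ∑ j ∈ F.filter (fun j => ¬ ({j.2, e j} : Finset ℕ) = {i.2, e i}),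
            p ^ (({i.2, e i} : Finset ℕ) ∪ {j.2, e j}).card
            ≤ ∑ _j ∈ F.filter (fun j => ¬ ({j.2, e j} : Finset ℕ) = {i.2, e i}), p^3 :=
              Finset.sum_le_sum hterm
          _ = ((F.filter (fun j => ¬ ({j.2, e j} : Finset ℕ) = {i.2, e i})).card : ℝ) * p^3 := by
              rw [Finset.sum_const, nsmul_eq_mul]
          _ ≤ 6*((I.image Prod.fst).card : ℝ)*p^3 := by
              have hc : (F.filter (fun j => ¬ ({j.2, e j} : Finset ℕ) = {i.2, e i})).card
                  ≤ 6 * (I.image Prod.fst).card :=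
                (Finset.card_le_card (Finset.filter_subset _ _)).trans
                  (count_intersect I e he i hi)
              have := mul_le_mul_of_nonneg_right
                (show ((F.filter (fun j => ¬ ({j.2, e j} : Finset ℕ) = {i.2, e i})).card : ℝ)
                  ≤ 6 * ((I.image Prod.fst).card : ℝ) by exact_mod_cast hc) (by positivity :
                  (0:ℝ) ≤ p^3)
              linarith
      linarith
    linarith
  calc ∑ i ∈ I, ∑ j ∈ I, p ^ (({i.2, e i} : Finset ℕ) ∪ {j.2, e j}).card
      ≤ ∑ _i ∈ I, ((I.card : ℝ) * p^4 + (3*p^2 + 6*((I.image Prod.fst).card : ℝ)*p^3)) :=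
        Finset.sum_le_sum key
    _ = (I.card : ℝ)^2 * p^4 + (I.card : ℝ) * (3*p^2 + 6*((I.image Prod.fst).card : ℝ)*p^3) := by
        rw [Finset.sum_const, nsmul_eq_mul]; ring

lemma randProb_nonneg (n : ℕ) (p : ℝ) (hp0 : 0 ≤ p) (hp1 : p ≤ 1) (E : Set (Finset ℕ)) :
    0 ≤ randProb n p E :=
  Finset.sum_nonneg fun S _ => Set.indicator_nonneg
    (fun T _ => mul_nonneg (pow_nonneg hp0 _) (pow_nonneg (by linarith) _)) S

lemma randProb_le_one (n : ℕ) (p : ℝ) (hp0 : 0 ≤ p) (hp1 : p ≤ 1) (E : Set (Finset ℕ)) :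
    randProb n p E ≤ 1 := by
  have h1 : randProb n p E ≤ ∑ S ∈ (Finset.Icc 1 n).powerset,
      p ^ S.card * (1-p) ^ (n - S.card) := by
    refine Finset.sum_le_sum fun S _ => ?_
    exact Set.indicator_le_self' (fun T _ =>
      mul_nonneg (pow_nonneg hp0 _) (pow_nonneg (by linarith) _)) S
  have h2 := sum_w_total (Finset.Icc 1 n) p
  rw [Nat.card_Icc] at h2
  simp only [Nat.add_sub_cancel] at h2
  linarith

set_option maxHeartbeats 1600000 in
lemma per_n (n : ℕ) (lamn kapn : ℕ) (A X : Finset ℕ) (p : ℝ)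
    (hp1 : p ≤ 1) (hppos : 0 < p)
    (hlam : 1 ≤ lamn) (hkap : 2 ≤ kapn) (hA : A ⊆ Finset.Icc 1 n) (hXA : X ⊆ A)
    (hXcard : X.card = lamn)
    (hD : ∀ x ∈ X, ∃ D : Finset ℕ, D.card = kapn ∧ ∀ d ∈ D, 1 ≤ d ∧
        (HasAPWithDiff (Splus A x) d ∨ HasAPWithDiff (Sminus A x) d)) :
    1 - (3 / (((lamn : ℝ) * (kapn : ℝ)) * p^2) + 6 / ((kapn : ℝ) * p))
      ≤ randProb n p {S : Finset ℕ | IsSchur ((↑A ∪ ↑S : Set ℕ))} := by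
  have hp0 : 0 ≤ p := le_of_lt hppos
  -- the difference sets
  set Dfun : ℕ → Finset ℕ := fun x => if hx : x ∈ X then (hD x hx).choose else ∅ with hDfun
  have hDcard : ∀ x ∈ X, (Dfun x).card = kapn := by
    intro x hx; simp only [hDfun, dif_pos hx]; exact (hD x hx).choose_spec.1
  have hDprop : ∀ x ∈ X, ∀ d ∈ Dfun x, 1 ≤ d ∧
      (HasAPWithDiff (Splus A x) d ∨ HasAPWithDiff (Sminus A x) d) := by
    intro x hx; simp only [hDfun, dif_pos hx]; exact (hD x hx).choose_spec.2
  -- the index set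
  set I : Finset (ℕ × ℕ) := X.biUnion (fun x => (Dfun x).image (fun d => (x, d))) with hI
  have hmemI : ∀ j : ℕ × ℕ, j ∈ I ↔ j.1 ∈ X ∧ j.2 ∈ Dfun j.1 := by
    intro j
    simp only [hI, Finset.mem_biUnion, Finset.mem_image]
    constructor
    · rintro ⟨x, hx, d, hd, rfl⟩; exact ⟨hx, hd⟩
    · rintro ⟨hx, hd⟩; exact ⟨j.1, hx, j.2, hd, rfl⟩
  have hIcard : I.card = lamn * kapn := by
    rw [hI, Finset.card_biUnion]
    · rw [← hXcard, Finset.sum_congr rfl fun x hx => ?_, Finset.sum_const, smul_eq_mul]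
      rw [Finset.card_image_of_injective _ (fun a b hab => (Prod.mk.injEq _ _ _ _).mp hab |>.2),
        hDcard x hx]
    · intro x hx y hy hxy
      simp only [Finset.disjoint_left, Finset.mem_image]
      rintro a ⟨d, _, rfl⟩ ⟨d', _, hd'⟩
      exact hxy (congrArg Prod.fst hd').symm
  have himg : (I.image Prod.fst).card ≤ lamn := by
    rw [← hXcard]
    apply Finset.card_le_card
    intro x hx
    simp only [Finset.mem_image] at hx
    obtain ⟨j, hj, rfl⟩ := hx
    exact ((hmemI j).mp hj).1
  -- the extra element
  set efun : ℕ × ℕ → ℕ := fun j =>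
    if HasAPWithDiff (Splus A j.1) j.2 then j.1 + j.2 else j.1 - j.2 with hefun
  have hXn : ∀ x ∈ X, 1 ≤ x ∧ x ≤ n := by
    intro x hx
    have := hA (hXA hx); rw [Finset.mem_Icc] at this; exact this
  have hAn : ∀ a ∈ A, 1 ≤ a ∧ a ≤ n := by
    intro a ha; have := hA ha; rw [Finset.mem_Icc] at this; exact this
  -- basic properties of efun on I
  have heprop : ∀ j ∈ I, (efun j = j.1 + j.2 ∨ efun j = j.1 - j.2) ∧ j.2 < efun j
      ∧ 1 ≤ j.2 := by
    intro j hj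
    obtain ⟨hjX, hjD⟩ := (hmemI j).mp hj
    obtain ⟨hd1, hap⟩ := hDprop j.1 hjX j.2 hjD
    by_cases hc : HasAPWithDiff (Splus A j.1) j.2
    · refine ⟨Or.inl (by simp [hefun, if_pos hc]), ?_, hd1⟩
      rw [hefun]; simp only [if_pos hc]
      have := (hXn j.1 hjX).1; omega
    · have hm : HasAPWithDiff (Sminus A j.1) j.2 := hap.resolve_left hc
      obtain ⟨a, ha0, _, _, ha3⟩ := hm
      rw [Sminus, Finset.mem_filter] at ha0 ha3
      have h1 : 1 ≤ a := (hAn a ha0.1).1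
      have h2 : a + 3 * j.2 < j.1 := ha3.2.1
      refine ⟨Or.inr (by simp [hefun, if_neg hc]), ?_, hd1⟩
      rw [hefun]; simp only [if_neg hc]
      omega
  -- the target pair sets
  have hTs : ∀ j ∈ I, ({j.2, efun j} : Finset ℕ) ⊆ Finset.Icc 1 n := by
    intro j hj
    obtain ⟨hjX, hjD⟩ := (hmemI j).mp hj
    obtain ⟨hd1, hap⟩ := hDprop j.1 hjX j.2 hjD
    intro t ht
    simp only [Finset.mem_insert, Finset.mem_singleton] at ht
    rw [Finset.mem_Icc]
    by_cases hc : HasAPWithDiff (Splus A j.1) j.2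
    · have he : efun j = j.1 + j.2 := by simp [hefun, if_pos hc]
      obtain ⟨a, ha0, _, _, ha3⟩ := hc
      rw [Splus, Finset.mem_filter] at ha0 ha3
      have h1 : 1 ≤ a := (hAn a ha0.1).1
      have h2 : a + 3 * j.2 ≤ n := (hAn _ ha3.1).2
      have h3 : j.1 + (a + 3 * j.2) ≤ n := (hAn _ ha3.2).2
      have h4 : 1 ≤ j.1 := (hXn j.1 hjX).1
      rcases ht with rfl | rfl
      · omega
      · rw [he]; omega
    · have hm : HasAPWithDiff (Sminus A j.1) j.2 := hap.resolve_left hc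
      obtain ⟨a, ha0, _, _, ha3⟩ := hm
      rw [Sminus, Finset.mem_filter] at ha0 ha3
      have h1 : 1 ≤ a := (hAn a ha0.1).1
      have h2 : a + 3 * j.2 ≤ n := (hAn _ ha3.1).2
      have h4 : a + 3 * j.2 < j.1 := ha3.2.1
      have h5 : j.1 ≤ n := (hXn j.1 hjX).2
      have he : efun j = j.1 - j.2 := by simp [hefun, if_neg hc]
      rcases ht with rfl | rfl
      · omega
      · rw [he]; omega
  -- Schur consequence
  have hSchur : ∀ S : Finset ℕ, (∃ j ∈ I, ({j.2, efun j} : Finset ℕ) ⊆ S) →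
      S ∈ {S : Finset ℕ | IsSchur ((↑A ∪ ↑S : Set ℕ))} := by
    intro S hex
    obtain ⟨j, hj, hsub⟩ := hex
    obtain ⟨hjX, hjD⟩ := (hmemI j).mp hj
    obtain ⟨hd1, hap⟩ := hDprop j.1 hjX j.2 hjD
    have hdS : j.2 ∈ S := hsub (by simp)
    have heS : efun j ∈ S := hsub (by simp)
    have hxU : (j.1 : ℕ) ∈ (↑A ∪ ↑S : Set ℕ) := Or.inl (hXA hjX)
    have hdU : (j.2 : ℕ) ∈ (↑A ∪ ↑S : Set ℕ) := Or.inr hdS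
    simp only [Set.mem_setOf_eq]
    by_cases hc : HasAPWithDiff (Splus A j.1) j.2
    · have he : efun j = j.1 + j.2 := by simp [hefun, if_pos hc]
      obtain ⟨a, ha0, ha1, ha2, ha3⟩ := hc
      rw [Splus, Finset.mem_filter] at ha0 ha1 ha2 ha3
      refine keyPlus _ j.1 a j.2 (Or.inl ha0.1) (Or.inl ha1.1) (Or.inl ha2.1)
        (Or.inl ha3.1) (Or.inl ha0.2) (Or.inl ha1.2) (Or.inl ha2.2) (Or.inl ha3.2)
        hxU hdU ?_
      rw [← he]; exact Or.inr heS
    · have hm : HasAPWithDiff (Sminus A j.1) j.2 := hap.resolve_left hc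
      obtain ⟨a, ha0, ha1, ha2, ha3⟩ := hm
      rw [Sminus, Finset.mem_filter] at ha0 ha1 ha2 ha3
      have he : efun j = j.1 - j.2 := by simp [hefun, hc]
      refine keyMinus _ j.1 a j.2 ha3.2.1 (Or.inl ha0.1) (Or.inl ha1.1) (Or.inl ha2.1)
        (Or.inl ha3.1) (Or.inl ha0.2.2) (Or.inl ha1.2.2) (Or.inl ha2.2.2) (Or.inl ha3.2.2)
        hxU hdU ?_
      rw [← he]; exact Or.inr heS
  -- second moment inequality
  have hSM := second_moment n p hp0 hp1 I (fun j => ({j.2, efun j} : Finset ℕ))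
    hTs _ hSchur
  have hcard2 : ∀ j ∈ I, (({j.2, efun j} : Finset ℕ)).card = 2 := by
    intro j hj; exact Ts_card _ _ (heprop j hj).2.1
  have hLHS : ∑ j ∈ I, p ^ (({j.2, efun j} : Finset ℕ)).card = (I.card : ℝ) * p^2 := by
    rw [Finset.sum_congr rfl fun j hj => by rw [hcard2 j hj], Finset.sum_const, nsmul_eq_mul]
  have hCM := count_main p hp0 hp1 I efun heprop
  set R := randProb n p {S : Finset ℕ | IsSchur ((↑A ∪ ↑S : Set ℕ))} with hR
  have hR0 : 0 ≤ R := randProb_nonneg n p hp0 hp1 _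
  have hR1 : R ≤ 1 := randProb_le_one n p hp0 hp1 _
  -- put everything together
  set L : ℝ := (lamn : ℝ) * (kapn : ℝ) with hL
  have hIcardR : (I.card : ℝ) = L := by rw [hIcard]; push_cast; rfl
  have himgR : ((I.image Prod.fst).card : ℝ) ≤ (lamn : ℝ) := by exact_mod_cast himg
  have hLpos : 0 < L := by
    rw [hL]
    have : (1:ℝ) ≤ (lamn : ℝ) := by exact_mod_cast hlam
    have : (2:ℝ) ≤ (kapn : ℝ) := by exact_mod_cast hkap
    nlinarith
  set A0 : ℝ := L * p^2 with hA0
  set C : ℝ := 3 + 6 * (lamn : ℝ) * p with hC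
  have hA0pos : 0 < A0 := by rw [hA0]; positivity
  have hCpos : 0 < C := by
    rw [hC]
    have : (0:ℝ) ≤ (lamn : ℝ) := Nat.cast_nonneg _
    nlinarith
  have hSum : ∑ i ∈ I, ∑ j ∈ I, p ^ (({i.2, efun i} : Finset ℕ) ∪ {j.2, efun j}).card
      ≤ A0^2 + A0 * C := by
    refine hCM.trans ?_
    rw [hIcardR]
    have h6 : 6*((I.image Prod.fst).card : ℝ)*p^3 ≤ 6*(lamn : ℝ)*p^3 := by
      have := himgR; nlinarith [pow_nonneg hp0 3]
    have hmul : L * (3*p^2 + 6*((I.image Prod.fst).card : ℝ)*p^3)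
        ≤ L * (3*p^2 + 6*(lamn : ℝ)*p^3) := by
      apply mul_le_mul_of_nonneg_left _ (le_of_lt hLpos)
      linarith
    have heq : L^2 * p^4 + L * (3*p^2 + 6*(lamn : ℝ)*p^3) = A0^2 + A0 * C := by
      rw [hA0, hC]; ring
    linarith
  have hKey : A0^2 ≤ R * (A0^2 + A0 * C) := by
    have hLHSeq : ∑ j ∈ I, p ^ (({j.2, efun j} : Finset ℕ)).card = A0 := by
      rw [hLHS, hIcardR]
    calc A0^2 = (∑ j ∈ I, p ^ (({j.2, efun j} : Finset ℕ)).card)^2 := by rw [hLHSeq]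
      _ ≤ R * (∑ i ∈ I, ∑ j ∈ I, p ^ (({i.2, efun i} : Finset ℕ) ∪ {j.2, efun j}).card) :=
          hSM
      _ ≤ R * (A0^2 + A0 * C) := mul_le_mul_of_nonneg_left hSum hR0
  have h3 : A0 - C ≤ R * A0 := by
    nlinarith [hKey, mul_nonneg (mul_nonneg (sub_nonneg.2 hR1) hA0pos.le) hCpos.le, hA0pos]
  have hlm : (0:ℝ) < (lamn : ℝ) := by exact_mod_cast Nat.lt_of_lt_of_le Nat.zero_lt_one hlam
  have hk : (0:ℝ) < (kapn : ℝ) := by exact_mod_cast (by omega : 0 < kapn)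
  have hgoal_eq : 3 / A0 + 6 / ((kapn : ℝ) * p) = C / A0 := by
    rw [hA0, hC, hL]
    field_simp
  rw [hgoal_eq]
  clear_value A0 C L R
  rw [sub_le_iff_le_add, ← sub_le_iff_le_add', le_div_iff₀ hA0pos]
  nlinarith [h3]

/-- Lemma 9: if `X n ⊆ A n ⊆ [n]` with `|X n| = λ(n)`, each `x ∈ X n`
has a set `D_x` of `κ(n) ≥ 2` positive common differences of 4-APs in `S⁺_{A n}(x)` or
`S⁻_{A n}(x)`, and `p = ω(max{(λ(n)·κ(n))^{-1/2}, κ(n)⁻¹})`, then the probability that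
`A n ∪ [n]_{p(n)}` is Schur tends to `1`. -/
theorem stmt10 (lam kap : ℕ → ℕ) (A X : ℕ → Finset ℕ) (p : ℕ → ℝ)
    (h : ∀ᶠ n : ℕ in atTop,
      1 ≤ lam n ∧ 2 ≤ kap n ∧ A n ⊆ Finset.Icc 1 n ∧ X n ⊆ A n ∧
      (X n).card = lam n ∧
      ∀ x ∈ X n, ∃ D : Finset ℕ, D.card = kap n ∧ ∀ d ∈ D, 1 ≤ d ∧
        (HasAPWithDiff (Splus (A n) x) d ∨ HasAPWithDiff (Sminus (A n) x) d))
    (hp : ∀ n, p n ∈ Set.Icc (0 : ℝ) 1)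
    (hpω : Tendsto (fun n =>
        p n / max (((lam n : ℝ) * (kap n : ℝ)) ^ (-(1 : ℝ) / 2)) ((kap n : ℝ)⁻¹))
      atTop atTop) :
    Tendsto (fun n => randProb n (p n)
        {S : Finset ℕ | IsSchur ((↑(A n) ∪ ↑S : Set ℕ))})
      atTop (nhds 1) := by
  have hev : ∀ᶠ n : ℕ in atTop, 1 ≤ lam n ∧ 2 ≤ kap n :=
    h.mono fun n hn => ⟨hn.1, hn.2.1⟩
  set M : ℕ → ℝ := fun n => max (((lam n : ℝ) * (kap n : ℝ)) ^ (-(1 : ℝ) / 2))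
    ((kap n : ℝ)⁻¹) with hM
  have hppos : ∀ᶠ n : ℕ in atTop, 0 < p n := by
    filter_upwards [hpω.eventually_ge_atTop 1] with n hn
    rcases lt_or_eq_of_le (hp n).1 with h' | h'
    · exact h'
    · exfalso; rw [← h'] at hn; simp at hn; linarith
  have hkp : Tendsto (fun n => (kap n : ℝ) * p n) atTop atTop := by
    apply tendsto_atTop_mono' atTop _ hpω
    filter_upwards [hev] with n hn
    have hk2 : (2:ℝ) ≤ (kap n : ℝ) := by exact_mod_cast hn.2
    have hkinv : (0:ℝ) < (kap n : ℝ)⁻¹ := by positivity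
    have hMk : (kap n : ℝ)⁻¹ ≤ M n := le_max_right _ _
    have hinv : (M n)⁻¹ ≤ (kap n : ℝ) := by
      rw [← inv_inv ((kap n : ℝ))]
      exact inv_anti₀ hkinv hMk
    calc p n / M n = p n * (M n)⁻¹ := div_eq_mul_inv _ _
      _ ≤ p n * (kap n : ℝ) := mul_le_mul_of_nonneg_left hinv (hp n).1
      _ = (kap n : ℝ) * p n := mul_comm _ _
  have hsq : Tendsto (fun n => p n * Real.sqrt ((lam n : ℝ) * (kap n : ℝ))) atTop atTop := by
    apply tendsto_atTop_mono' atTop _ hpω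
    filter_upwards [hev] with n hn
    have h1 : (1:ℝ) ≤ (lam n : ℝ) * (kap n : ℝ) := by
      have : 1 * 2 ≤ lam n * kap n := Nat.mul_le_mul hn.1 hn.2
      have h2 : (2:ℝ) ≤ ((lam n * kap n : ℕ) : ℝ) := by exact_mod_cast this
      push_cast at h2; linarith
    have h0 : (0:ℝ) ≤ (lam n : ℝ) * (kap n : ℝ) := by linarith
    have hrw : ((lam n : ℝ) * (kap n : ℝ)) ^ (-(1 : ℝ) / 2)
        = (Real.sqrt ((lam n : ℝ) * (kap n : ℝ)))⁻¹ := by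
      rw [neg_div, Real.rpow_neg h0, ← Real.sqrt_eq_rpow]
    have hMge : (Real.sqrt ((lam n : ℝ) * (kap n : ℝ)))⁻¹ ≤ M n := by
      rw [← hrw]; exact le_max_left _ _
    have hinv : (M n)⁻¹ ≤ Real.sqrt ((lam n : ℝ) * (kap n : ℝ)) := by
      rw [← inv_inv (Real.sqrt ((lam n : ℝ) * (kap n : ℝ)))]
      exact inv_anti₀ (by positivity) hMge
    calc p n / M n = p n * (M n)⁻¹ := div_eq_mul_inv _ _
      _ ≤ p n * Real.sqrt ((lam n : ℝ) * (kap n : ℝ)) :=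
          mul_le_mul_of_nonneg_left hinv (hp n).1
  have hLp2 : Tendsto (fun n => ((lam n : ℝ) * (kap n : ℝ)) * p n^2) atTop atTop := by
    have hmul := hsq.atTop_mul_atTop₀ hsq
    apply hmul.congr'
    filter_upwards [hev] with n hn
    have h0 : (0:ℝ) ≤ (lam n : ℝ) * (kap n : ℝ) := by positivity
    rw [mul_mul_mul_comm, Real.mul_self_sqrt h0]
    ring
  have heps : Tendsto (fun n => 3 / (((lam n : ℝ) * (kap n : ℝ)) * p n^2)
      + 6 / ((kap n : ℝ) * p n)) atTop (nhds 0) := by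
    have h1 : Tendsto (fun n => 3 / (((lam n : ℝ) * (kap n : ℝ)) * p n^2)) atTop (nhds 0) := by
      simp only [div_eq_mul_inv]
      have := hLp2.inv_tendsto_atTop.const_mul (3:ℝ)
      simpa using this
    have h2 : Tendsto (fun n => 6 / ((kap n : ℝ) * p n)) atTop (nhds 0) := by
      simp only [div_eq_mul_inv]
      have := hkp.inv_tendsto_atTop.const_mul (6:ℝ)
      simpa using this
    simpa using h1.add h2
  have hlowT : Tendsto (fun n => 1 - (3 / (((lam n : ℝ) * (kap n : ℝ)) * p n^2)
      + 6 / ((kap n : ℝ) * p n))) atTop (nhds 1) := by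
    have := (tendsto_const_nhds (x := (1:ℝ)) (f := atTop)).sub heps
    simpa using this
  have hlow : ∀ᶠ n : ℕ in atTop, 1 - (3 / (((lam n : ℝ) * (kap n : ℝ)) * p n^2)
      + 6 / ((kap n : ℝ) * p n))
      ≤ randProb n (p n) {S : Finset ℕ | IsSchur ((↑(A n) ∪ ↑S : Set ℕ))} := by
    filter_upwards [h, hppos] with n hn hpn
    exact per_n n (lam n) (kap n) (A n) (X n) (p n) (hp n).2 hpn hn.1 hn.2.1 hn.2.2.1
      hn.2.2.2.1 hn.2.2.2.2.1 hn.2.2.2.2.2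
  have hup : ∀ᶠ n : ℕ in atTop, randProb n (p n)
      {S : Finset ℕ | IsSchur ((↑(A n) ∪ ↑S : Set ℕ))} ≤ 1 :=
    Eventually.of_forall fun n => randProb_le_one n (p n) (hp n).1 (hp n).2 _
  exact tendsto_of_tendsto_of_tendsto_of_le_of_le' hlowT tendsto_const_nhds hlow hup
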